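/- Fix real parameters m₁, m₂, r₁, r₂, g > 0. Let z = (θ, ω) : ℝ → ℝ⁴ be a differentiable curve satisfying the uncontrolled system ż(t) = f(z(t)) for all t ∈ ℝ, where f(z) = (ω₁, ω₂, a₁(z)/Δ(θ), a₂(z)/Δ(θ)). Then the total energy E(z(t)) = T(θ(t), ω(t)) + U(θ(t)) is constant in t, where T(θ, ω) = ½ (m₁ + m₂) r₁² ω₁² + m₂ r₁ r₂ ω₁ ω₂ cos(θ₁ − θ₂) + ½ m₂ r₂² ω₂² and U(θ) = g ((m₁ + m₂) r₁ cos θ₁ + m₂ r₂ cos θ₂). -/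

import Mathlib

noncomputable section

/-- `Δ(θ) = r₁ r₂ (m₁ + m₂ sin²(θ₁ − θ₂))`. -/
def Δpend (m₁ m₂ r₁ r₂ : ℝ) (z : Fin 4 → ℝ) : ℝ :=
  r₁ * r₂ * (m₁ + m₂ * Real.sin (z 0 - z 1) ^ 2)

def b₁pend (m₁ m₂ r₁ r₂ : ℝ) (z : Fin 4 → ℝ) : ℝ :=
  m₂ * r₂ * (r₁ * m₂ * Real.cos (z 0 - z 1) - r₂ * m₁)

def b₂pend (m₁ m₂ r₁ r₂ : ℝ) (z : Fin 4 → ℝ) : ℝ :=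
  m₂ * r₁ * (r₂ * m₁ * Real.cos (z 0 - z 1) - r₁ * (m₁ + m₂))

def a₁pend (m₁ m₂ r₁ r₂ g : ℝ) (z : Fin 4 → ℝ) : ℝ :=
  -g * r₂ * (m₂ * Real.sin (z 1) * Real.cos (z 0 - z 1)
      - (m₁ + m₂) * Real.sin (z 0))
  - m₂ * r₂ * Real.sin (z 0 - z 1) *
      (r₁ * Real.cos (z 0 - z 1) * (z 2) ^ 2 + r₂ * (z 3) ^ 2)

def a₂pend (m₁ m₂ r₁ r₂ g : ℝ) (z : Fin 4 → ℝ) : ℝ :=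
  -g * r₁ * (m₁ + m₂) * (Real.cos (z 0 - z 1) * Real.sin (z 0) - Real.sin (z 1))
  + r₁ * Real.sin (z 0 - z 1) *
      (r₁ * (m₁ + m₂) * (z 2) ^ 2 + r₂ * m₂ * Real.cos (z 0 - z 1) * (z 3) ^ 2)

/-- The drift-type vector field `X₁(z) = (Δ(θ) ω₁, Δ(θ) ω₂, a₁(z), a₂(z))`. -/
def X₁pend (m₁ m₂ r₁ r₂ g : ℝ) : (Fin 4 → ℝ) → (Fin 4 → ℝ) :=
  fun z => ![Δpend m₁ m₂ r₁ r₂ z * z 2, Δpend m₁ m₂ r₁ r₂ z * z 3,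
    a₁pend m₁ m₂ r₁ r₂ g z, a₂pend m₁ m₂ r₁ r₂ g z]

/-- The control-type vector field `X₂(z) = (0, 0, b₁(θ), b₂(θ))`. -/
def X₂pend (m₁ m₂ r₁ r₂ : ℝ) : (Fin 4 → ℝ) → (Fin 4 → ℝ) :=
  fun z => ![0, 0, b₁pend m₁ m₂ r₁ r₂ z, b₂pend m₁ m₂ r₁ r₂ z]

/-- The Lie bracket `[X, Y](z) = DY(z)·X(z) − DX(z)·Y(z)` of vector fields. -/
def lieBracket (X Y : (Fin 4 → ℝ) → (Fin 4 → ℝ)) : (Fin 4 → ℝ) → (Fin 4 → ℝ) :=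
  fun z => fderiv ℝ Y z (X z) - fderiv ℝ X z (Y z)

/-- `X₃ = [X₁, X₂]`. -/
def X₃pend (m₁ m₂ r₁ r₂ g : ℝ) : (Fin 4 → ℝ) → (Fin 4 → ℝ) :=
  lieBracket (X₁pend m₁ m₂ r₁ r₂ g) (X₂pend m₁ m₂ r₁ r₂)

/-- `X₄ = [X₂, X₃]`. -/
def X₄pend (m₁ m₂ r₁ r₂ g : ℝ) : (Fin 4 → ℝ) → (Fin 4 → ℝ) :=
  lieBracket (X₂pend m₁ m₂ r₁ r₂) (X₃pend m₁ m₂ r₁ r₂ g)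

/-- The family `F = {X₁, X₂, X₃, X₄}`. -/
def Fpend (m₁ m₂ r₁ r₂ g : ℝ) : Set ((Fin 4 → ℝ) → (Fin 4 → ℝ)) :=
  {X₁pend m₁ m₂ r₁ r₂ g, X₂pend m₁ m₂ r₁ r₂,
   X₃pend m₁ m₂ r₁ r₂ g, X₄pend m₁ m₂ r₁ r₂ g}

/-- Iterated Lie brackets `[Y₁,[…[Y_{k−1}, Y_k]…]]` of members of `F`
(including the members of `F` themselves). -/
inductive IterBracket (F : Set ((Fin 4 → ℝ) → (Fin 4 → ℝ))) :
    ((Fin 4 → ℝ) → (Fin 4 → ℝ)) → Prop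
  | base {X} : X ∈ F → IterBracket F X
  | bracket {X Y} : X ∈ F → IterBracket F Y → IterBracket F (lieBracket X Y)

/-- `F` is bracket-generating on `ℝ⁴`. -/
def BracketGenerating (F : Set ((Fin 4 → ℝ) → (Fin 4 → ℝ))) : Prop :=
  ∀ z : Fin 4 → ℝ,
    Submodule.span ℝ {v : Fin 4 → ℝ | ∃ B, IterBracket F B ∧ v = B z} = ⊤

end

noncomputable section

/-- The drift vector field `f(z) = (ω₁, ω₂, a₁(z)/Δ(θ), a₂(z)/Δ(θ))`. -/
def fpend (m₁ m₂ r₁ r₂ g : ℝ) : (Fin 4 → ℝ) → (Fin 4 → ℝ) :=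
  fun z => ![z 2, z 3,
    a₁pend m₁ m₂ r₁ r₂ g z / Δpend m₁ m₂ r₁ r₂ z,
    a₂pend m₁ m₂ r₁ r₂ g z / Δpend m₁ m₂ r₁ r₂ z]

/-- Kinetic energy. -/
def Tpend (m₁ m₂ r₁ r₂ : ℝ) (z : Fin 4 → ℝ) : ℝ :=
  (1 / 2) * (m₁ + m₂) * r₁ ^ 2 * (z 2) ^ 2
    + m₂ * r₁ * r₂ * z 2 * z 3 * Real.cos (z 0 - z 1)
    + (1 / 2) * m₂ * r₂ ^ 2 * (z 3) ^ 2

/-- Potential energy. -/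
def Upend (m₁ m₂ r₁ r₂ g : ℝ) (z : Fin 4 → ℝ) : ℝ :=
  g * ((m₁ + m₂) * r₁ * Real.cos (z 0) + m₂ * r₂ * Real.cos (z 1))

end

/-- **Energy conservation for the uncontrolled system.** Along any solution of
`ż = f(z)`, the total energy `T + U` is constant. -/
theorem energy_conservation
    (m₁ m₂ r₁ r₂ g : ℝ) (hm₁ : 0 < m₁) (hm₂ : 0 < m₂)
    (hr₁ : 0 < r₁) (hr₂ : 0 < r₂) (hg : 0 < g)
    (z : ℝ → (Fin 4 → ℝ))
    (hz : ∀ t : ℝ, HasDerivAt z (fpend m₁ m₂ r₁ r₂ g (z t)) t) :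
    ∀ s t : ℝ,
      Tpend m₁ m₂ r₁ r₂ (z s) + Upend m₁ m₂ r₁ r₂ g (z s) =
      Tpend m₁ m₂ r₁ r₂ (z t) + Upend m₁ m₂ r₁ r₂ g (z t) := by
  have hD : ∀ u : ℝ, Δpend m₁ m₂ r₁ r₂ (z u) ≠ 0 := by
    intro u
    have h1 : (0:ℝ) < m₁ + m₂ * Real.sin (z u 0 - z u 1) ^ 2 := by positivity
    have := mul_pos (mul_pos hr₁ hr₂) h1
    simpa [Δpend] using this.ne'
  have key : ∀ u : ℝ, HasDerivAt
      (fun t => Tpend m₁ m₂ r₁ r₂ (z t) + Upend m₁ m₂ r₁ r₂ g (z t)) 0 u := by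
    intro u
    have hi := hasDerivAt_pi.mp (hz u)
    have h0 : HasDerivAt (fun t => z t 0) (z u 2) u := by
      simpa [fpend] using hi 0
    have h1 : HasDerivAt (fun t => z t 1) (z u 3) u := by
      simpa [fpend] using hi 1
    have h2 : HasDerivAt (fun t => z t 2)
        (a₁pend m₁ m₂ r₁ r₂ g (z u) / Δpend m₁ m₂ r₁ r₂ (z u)) u := by
      simpa [fpend] using hi 2
    have h3 : HasDerivAt (fun t => z t 3)
        (a₂pend m₁ m₂ r₁ r₂ g (z u) / Δpend m₁ m₂ r₁ r₂ (z u)) u := by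
      simpa [fpend] using hi 3
    have hT1 := (h2.pow 2).const_mul ((1/2) * (m₁ + m₂) * r₁ ^ 2)
    have hT2 := ((h2.const_mul (m₂ * r₁ * r₂)).mul h3).mul ((h0.sub h1).cos)
    have hT3 := (h3.pow 2).const_mul ((1/2) * m₂ * r₂ ^ 2)
    have hT4 := ((h0.cos.const_mul ((m₁ + m₂) * r₁)).add
      (h1.cos.const_mul (m₂ * r₂))).const_mul g
    have hE := ((hT1.add hT2).add hT3).add hT4
    have heq : HasDerivAt
        (fun t => Tpend m₁ m₂ r₁ r₂ (z t) + Upend m₁ m₂ r₁ r₂ g (z t)) 0 u := by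
      have hfun : (fun t => Tpend m₁ m₂ r₁ r₂ (z t) + Upend m₁ m₂ r₁ r₂ g (z t))
          = (fun t => (1/2) * (m₁ + m₂) * r₁ ^ 2 * z t 2 ^ 2
              + m₂ * r₁ * r₂ * z t 2 * z t 3 * Real.cos (z t 0 - z t 1)
              + (1/2) * m₂ * r₂ ^ 2 * z t 3 ^ 2
              + g * ((m₁ + m₂) * r₁ * Real.cos (z t 0) + m₂ * r₂ * Real.cos (z t 1))) := by
        funext t; simp only [Tpend, Upend]
      rw [hfun]
      convert hE using 1 <;> try rfl
      have hDu := hD u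
      simp only [a₁pend, a₂pend, Δpend] at hDu ⊢
      set s := Real.sin (z u 0 - z u 1) with hs
      set c := Real.cos (z u 0 - z u 1) with hc
      have hsc : s ^ 2 + c ^ 2 = 1 := Real.sin_sq_add_cos_sq _
      norm_num
      have hP1 : (m₁ + m₂) * r₁ ^ 2 * (-g * r₂ * (m₂ * Real.sin (z u 1) * c - (m₁ + m₂) * Real.sin (z u 0))
            - m₂ * r₂ * s * (r₁ * c * (z u 2) ^ 2 + r₂ * (z u 3) ^ 2))
          + m₂ * r₁ * r₂ * c * (-g * r₁ * (m₁ + m₂) * (c * Real.sin (z u 0) - Real.sin (z u 1))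
            + r₁ * s * (r₁ * (m₁ + m₂) * (z u 2) ^ 2 + r₂ * m₂ * c * (z u 3) ^ 2))
          = r₁ * ((m₁ + m₂) * g * Real.sin (z u 0) - m₂ * r₂ * s * (z u 3) ^ 2)
            * (r₁ * r₂ * (m₁ + m₂ * s ^ 2)) := by
        linear_combination (-(m₁ + m₂) * r₁ ^ 2 * r₂ * g * Real.sin (z u 0) * m₂
          + m₂ ^ 2 * r₁ ^ 2 * r₂ ^ 2 * s * (z u 3) ^ 2) * hsc
      have hP2 : m₂ * r₁ * r₂ * c * (-g * r₂ * (m₂ * Real.sin (z u 1) * c - (m₁ + m₂) * Real.sin (z u 0))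
            - m₂ * r₂ * s * (r₁ * c * (z u 2) ^ 2 + r₂ * (z u 3) ^ 2))
          + m₂ * r₂ ^ 2 * (-g * r₁ * (m₁ + m₂) * (c * Real.sin (z u 0) - Real.sin (z u 1))
            + r₁ * s * (r₁ * (m₁ + m₂) * (z u 2) ^ 2 + r₂ * m₂ * c * (z u 3) ^ 2))
          = m₂ * r₂ * (g * Real.sin (z u 1) + r₁ * s * (z u 2) ^ 2)
            * (r₁ * r₂ * (m₁ + m₂ * s ^ 2)) := by
        linear_combination (-m₂ ^ 2 * r₁ * r₂ ^ 2 * g * Real.sin (z u 1)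
          - m₂ ^ 2 * r₁ ^ 2 * r₂ ^ 2 * s * (z u 2) ^ 2) * hsc
      have e1 : (m₁ + m₂) * r₁ ^ 2 * ((-g * r₂ * (m₂ * Real.sin (z u 1) * c - (m₁ + m₂) * Real.sin (z u 0))
            - m₂ * r₂ * s * (r₁ * c * (z u 2) ^ 2 + r₂ * (z u 3) ^ 2)) / (r₁ * r₂ * (m₁ + m₂ * s ^ 2)))
          + m₂ * r₁ * r₂ * c * ((-g * r₁ * (m₁ + m₂) * (c * Real.sin (z u 0) - Real.sin (z u 1))
            + r₁ * s * (r₁ * (m₁ + m₂) * (z u 2) ^ 2 + r₂ * m₂ * c * (z u 3) ^ 2)) / (r₁ * r₂ * (m₁ + m₂ * s ^ 2)))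
          = r₁ * ((m₁ + m₂) * g * Real.sin (z u 0) - m₂ * r₂ * s * (z u 3) ^ 2) := by
        rw [mul_div_assoc', mul_div_assoc', ← add_div, hP1, mul_div_assoc, div_self hDu, mul_one]
      have e2 : m₂ * r₁ * r₂ * c * ((-g * r₂ * (m₂ * Real.sin (z u 1) * c - (m₁ + m₂) * Real.sin (z u 0))
            - m₂ * r₂ * s * (r₁ * c * (z u 2) ^ 2 + r₂ * (z u 3) ^ 2)) / (r₁ * r₂ * (m₁ + m₂ * s ^ 2)))
          + m₂ * r₂ ^ 2 * ((-g * r₁ * (m₁ + m₂) * (c * Real.sin (z u 0) - Real.sin (z u 1))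
            + r₁ * s * (r₁ * (m₁ + m₂) * (z u 2) ^ 2 + r₂ * m₂ * c * (z u 3) ^ 2)) / (r₁ * r₂ * (m₁ + m₂ * s ^ 2)))
          = m₂ * r₂ * (g * Real.sin (z u 1) + r₁ * s * (z u 2) ^ 2) := by
        rw [mul_div_assoc', mul_div_assoc', ← add_div, hP2, mul_div_assoc, div_self hDu, mul_one]
      linear_combination (-(z u 2)) * e1 + (-(z u 3)) * e2
    exact heq
  intro s t
  exact is_const_of_deriv_eq_zero
    (fun u => (key u).differentiableAt) (fun u => (key u).deriv) s t
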